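/- Let L|K be a finitely σ-generated extension of difference fields such that L|K is Galois as a field extension, and let a be a minimal substandard generator of L|K. Then σ(a) is also a substandard generator of L|K, and [K(σ(a)) : K] = [K(a) : K]. -/

import Mathlib

open IntermediateField

/-- The tower of intermediate fields `E_i = K(F, σ(F), …, σ^i(F))`. -/
noncomputable def sigmaPartialField (K L : Type) [Field K] [Field L] [Algebra K L]
    (σL : L →+* L) (F : Set L) (i : ℕ) : IntermediateField K L :=
  IntermediateField.adjoin K (⋃ j ∈ Finset.range (i + 1), σL^[j] '' F)

/-- `L|K` has limit degree `d`: for some finite σ-generating set `F` of `L|K`, the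
degrees `d_i = [E_i : E_{i-1}]` (expressed via `[E_{i+1} : K] = d·[E_i : K]`)
are eventually equal to `d`. -/
def HasLimitDegree (K L : Type) [Field K] [Field L] [Algebra K L]
    (σL : L →+* L) (d : ℕ) : Prop :=
  ∃ F : Finset L,
    IntermediateField.adjoin K (⋃ i : ℕ, σL^[i] '' (F : Set L)) = ⊤ ∧
      ∃ N : ℕ, ∀ i ≥ N,
        Module.finrank K ↥(sigmaPartialField K L σL (F : Set L) (i + 1))
          = d * Module.finrank K ↥(sigmaPartialField K L σL (F : Set L) i)

/-- `a` is a substandard generator of `L|K` (with `d = ld(L|K)`):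
`L` is σ-radicial over `K⟨a⟩`, `[K(a,σ(a)) : K(a)] = d`, and `K(a)|K` is Galois. -/
def IsSubstandardGenerator (K L : Type) [Field K] [Field L] [Algebra K L]
    (σL : L →+* L) (d : ℕ) (a : L) : Prop :=
  (∀ x : L, ∃ n : ℕ,
      σL^[n] x ∈ IntermediateField.adjoin K (Set.range fun i : ℕ => σL^[i] a)) ∧
    Module.finrank K ↥(IntermediateField.adjoin K {a, σL a})
      = d * Module.finrank K ↥(IntermediateField.adjoin K {a}) ∧
    IsGalois K ↥(IntermediateField.adjoin K ({a} : Set L))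


open Polynomial


section GenAux
variable {L : Type} [Field L]
variable {A B : Type} [Field A] [Field B] [Algebra A L] [Algebra B L]

lemma gen_adjoin_mem (σ : L →+* L) (ψ : A →+* B)
    (hψ : ∀ y : A, algebraMap B L (ψ y) = σ (algebraMap A L y))
    {S T : Set L} (h : ∀ s ∈ S, σ s ∈ adjoin B T) {x : L} (hx : x ∈ adjoin A S) :
    σ x ∈ adjoin B T := by
  induction hx using adjoin_induction with
  | mem s hs => exact h s hs
  | algebraMap y => rw [← hψ]; exact IntermediateField.algebraMap_mem _ _
  | add x y hx hy ihx ihy => rw [map_add]; exact add_mem ihx ihy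
  | inv x hx ihx => rw [map_inv₀]; exact inv_mem ihx
  | mul x y hx hy ihx ihy => rw [map_mul]; exact mul_mem ihx ihy

lemma gen_deg_le (σ : L →+* L) (ψ : A →+* B)
    (hψ : ∀ y : A, algebraMap B L (ψ y) = σ (algebraMap A L y))
    (x : L) (hxA : IsIntegral A x) (hxB : IsIntegral B (σ x)) :
    Module.finrank B ↥(adjoin B {σ x}) ≤ Module.finrank A ↥(adjoin A {x}) := by
  have h1 : Module.finrank B ↥(adjoin B {σ x}) = (minpoly B (σ x)).natDegree := by
    simpa using IntermediateField.adjoin.finrank hxB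
  have h2 : Module.finrank A ↥(adjoin A {x}) = (minpoly A x).natDegree := by
    simpa using IntermediateField.adjoin.finrank hxA
  rw [h1, h2]
  have hcomp : (algebraMap B L).comp ψ = σ.comp (algebraMap A L) := RingHom.ext hψ
  have h0 : Polynomial.aeval (σ x) ((minpoly A x).map ψ) = 0 := by
    rw [Polynomial.aeval_def, Polynomial.eval₂_map, hcomp, ← Polynomial.hom_eval₂]
    rw [← Polynomial.aeval_def, minpoly.aeval, map_zero]
  have hne : (minpoly A x).map ψ ≠ 0 :=
    Polynomial.map_ne_zero (minpoly.ne_zero hxA)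
  calc (minpoly B (σ x)).natDegree ≤ ((minpoly A x).map ψ).natDegree :=
        Polynomial.natDegree_le_of_dvd (minpoly.dvd _ _ h0) hne
    _ = (minpoly A x).natDegree := Polynomial.natDegree_map ψ

lemma finrank_restrict' (M : IntermediateField A L) (N : IntermediateField ↥M L) :
    Module.finrank A ↥(N.restrictScalars A) = Module.finrank A ↥M * Module.finrank ↥M ↥N :=
  (Module.finrank_mul_finrank A ↥M ↥N).symm

/-- restriction of `σ` to a ring hom between adjoined fields -/
noncomputable def sigmaRes (σ : L →+* L) (ψ : A →+* B)
    (hψ : ∀ y : A, algebraMap B L (ψ y) = σ (algebraMap A L y)) (x : L) :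
    ↥(adjoin A {x}) →+* ↥(adjoin B {σ x}) where
  toFun y := ⟨σ y.1, by
    refine gen_adjoin_mem σ ψ hψ (S := {x}) ?_ y.2
    rintro s rfl
    exact subset_adjoin _ _ rfl⟩
  map_one' := by ext; simp
  map_mul' y z := by ext; simp
  map_zero' := by ext; simp
  map_add' y z := by ext; simp

end GenAux

section SetVersion
variable {L : Type} [Field L]

lemma gen_deg_le_finset (S : Finset L) : ∀ {A B : Type} [Field A] [Field B] [Algebra A L]
    [Algebra B L] (σ : L →+* L) (ψ : A →+* B)
    (_ : ∀ y : A, algebraMap B L (ψ y) = σ (algebraMap A L y))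
    (_ : ∀ y : L, IsIntegral A y) (_ : ∀ y : L, IsIntegral B y),
    Module.finrank B ↥(adjoin B (σ '' (↑S : Set L))) ≤ Module.finrank A ↥(adjoin A (↑S : Set L)) := by
  classical
  induction S using Finset.induction_on with
  | empty =>
    intro A B _ _ _ _ σ ψ hψ hA hB
    rw [Finset.coe_empty, Set.image_empty, IntermediateField.adjoin_empty,
      IntermediateField.adjoin_empty, IntermediateField.finrank_bot,
      IntermediateField.finrank_bot]
  | @insert x S hxS ih =>
    intro A B _ _ _ _ σ ψ hψ hA hB
    have eB : adjoin B (σ '' ↑(insert x S)) =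
        (adjoin (↥(adjoin B {σ x})) (σ '' ↑S)).restrictScalars B := by
      rw [adjoin_adjoin_left, Finset.coe_insert, Set.image_insert_eq, Set.insert_eq]
    have eA : adjoin A (↑(insert x S) : Set L) =
        (adjoin (↥(adjoin A {x})) (↑S : Set L)).restrictScalars A := by
      rw [adjoin_adjoin_left, Finset.coe_insert, Set.insert_eq]
    rw [eA, eB, finrank_restrict', finrank_restrict']
    exact Nat.mul_le_mul (gen_deg_le σ ψ hψ x (hA x) (hB (σ x)))
      (ih σ (sigmaRes σ ψ hψ x) (fun y => rfl)
        (fun y => (hA y).tower_top) (fun y => (hB y).tower_top))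

end SetVersion


lemma pow_binom (g k : ℕ) : g ^ (k + 1) + (k + 1) * g ^ k ≤ (g + 1) ^ (k + 1) := by
  induction k with
  | zero => simp [pow_succ]
  | succ k ih =>
    have key : g ^ (k + 2) + (k + 2) * g ^ (k + 1) ≤ (g ^ (k + 1) + (k + 1) * g ^ k) * (g + 1) := by
      have e1 : g ^ (k + 2) = g ^ (k + 1) * g := by ring
      have e2 : g ^ (k + 1) = g ^ k * g := by ring
      nlinarith [Nat.zero_le (g ^ k), Nat.zero_le (g ^ (k + 1))]
    calc g ^ (k + 1 + 1) + (k + 1 + 1) * g ^ (k + 1)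
        ≤ (g ^ (k + 1) + (k + 1) * g ^ k) * (g + 1) := key
      _ ≤ (g + 1) ^ (k + 1) * (g + 1) := Nat.mul_le_mul_right _ ih
      _ = (g + 1) ^ (k + 1 + 1) := by ring

lemma num_key {d g D B : ℕ} (hD : 1 ≤ D) (h : ∀ k, d ^ k * D ≤ g ^ k * B) : d ≤ g := by
  by_contra hlt
  push_neg at hlt
  rcases Nat.eq_zero_or_pos g with rfl | hg
  · have h1 := h 1
    simp at h1
    rcases h1 with h1 | h1 <;> omega
  · set k := B * g with hk
    have h1 : (g + 1) ^ (k + 1) ≤ d ^ (k + 1) := Nat.pow_le_pow_left (by omega) _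
    have h2 : d ^ (k + 1) ≤ d ^ (k + 1) * D := Nat.le_mul_of_pos_right _ hD
    have h3 := h (k + 1)
    have h4 := pow_binom g k
    have h5 : g ^ (k + 1) * B = k * g ^ k := by
      rw [hk, pow_succ]; ring
    have h6 : (k + 1) * g ^ k = k * g ^ k + g ^ k := by ring
    have hgk : 1 ≤ g ^ k := Nat.one_le_pow _ _ hg
    have hchain : g ^ (k + 1) + (k + 1) * g ^ k ≤ g ^ (k + 1) * B :=
      le_trans h4 (le_trans h1 (le_trans h2 h3))
    rw [h5, h6] at hchain
    generalize g ^ (k + 1) = X at hchain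
    generalize g ^ k = Y at hchain hgk
    generalize k * Y = u at hchain
    omega



section Tower
variable {K L : Type} [Field K] [Field L] [Algebra K L] {σK : K →+* K} {σL : L →+* L}

lemma mem_spfGen {F : Set L} {i : ℕ} {x : L} :
    x ∈ (⋃ j ∈ Finset.range (i + 1), σL^[j] '' F) ↔ ∃ j ≤ i, ∃ f ∈ F, σL^[j] f = x := by
  simp only [Set.mem_iUnion, Set.mem_image, Finset.mem_range, Nat.lt_succ_iff]
  constructor
  · rintro ⟨j, hj, f, hf, rfl⟩
    exact ⟨j, hj, f, hf, rfl⟩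
  · rintro ⟨j, hj, f, hf, rfl⟩
    exact ⟨j, hj, f, hf, rfl⟩

lemma spfGen_finite {F : Set L} (hF : F.Finite) (i : ℕ) :
    (⋃ j ∈ Finset.range (i + 1), σL^[j] '' F).Finite :=
  Set.Finite.biUnion (Finset.range (i + 1)).finite_toSet (fun _ _ => hF.image _)

lemma spfGen_succ (F : Set L) (i : ℕ) :
    (⋃ j ∈ Finset.range (i + 1 + 1), σL^[j] '' F)
      = (⋃ j ∈ Finset.range (i + 1), σL^[j] '' F) ∪ σL^[i + 1] '' F := by
  ext x
  simp only [Set.mem_union, mem_spfGen, Set.mem_iUnion, Finset.mem_range, Nat.lt_succ_iff,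
    Set.mem_image]
  constructor
  · rintro ⟨j, hj, f, hf, rfl⟩
    rcases Nat.lt_or_ge j (i + 1) with h | h
    · exact Or.inl ⟨j, by omega, f, hf, rfl⟩
    · have : j = i + 1 := by omega
      subst this
      exact Or.inr ⟨f, hf, rfl⟩
  · rintro (⟨j, hj, f, hf, rfl⟩ | ⟨f, hf, rfl⟩)
    · exact ⟨j, by omega, f, hf, rfl⟩
    · exact ⟨i + 1, le_refl _, f, hf, rfl⟩

lemma spf_mono (F : Set L) : Monotone (sigmaPartialField K L σL F) := by
  intro i i' h
  apply IntermediateField.adjoin.mono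
  intro x hx
  rw [mem_spfGen] at hx ⊢
  obtain ⟨j, hj, f, hf, rfl⟩ := hx
  exact ⟨j, le_trans hj h, f, hf, rfl⟩

lemma spf_succ_eq (F : Set L) (i : ℕ) :
    (adjoin (↥(sigmaPartialField K L σL F i)) (σL^[i + 1] '' F)).restrictScalars K
      = sigmaPartialField K L σL F (i + 1) := by
  rw [sigmaPartialField, sigmaPartialField, spfGen_succ, ← adjoin_adjoin_left]

lemma spf_finrank_succ (F : Set L) (i : ℕ) :
    Module.finrank K ↥(sigmaPartialField K L σL F (i + 1))
      = Module.finrank K ↥(sigmaPartialField K L σL F i)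
        * Module.finrank ↥(sigmaPartialField K L σL F i)
            ↥(adjoin (↥(sigmaPartialField K L σL F i)) (σL^[i + 1] '' F)) := by
  rw [← spf_succ_eq F i]
  exact finrank_restrict' _ _

lemma spf_sigma_mem (hcomp : ∀ x : K, σL (algebraMap K L x) = algebraMap K L (σK x))
    (F : Set L) {i : ℕ} {x : L} (hx : x ∈ sigmaPartialField K L σL F i) :
    σL x ∈ sigmaPartialField K L σL F (i + 1) := by
  refine gen_adjoin_mem σL σK (fun y => (hcomp y).symm) ?_ hx
  intro s hs
  rw [mem_spfGen] at hs
  obtain ⟨j, hj, f, hf, rfl⟩ := hs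
  refine subset_adjoin _ _ ?_
  rw [mem_spfGen]
  exact ⟨j + 1, by omega, f, hf, Function.iterate_succ_apply' σL j f⟩

lemma spf_sigma_iterate_mem (hcomp : ∀ x : K, σL (algebraMap K L x) = algebraMap K L (σK x))
    (F : Set L) (k : ℕ) {i : ℕ} {x : L} (hx : x ∈ sigmaPartialField K L σL F i) :
    σL^[k] x ∈ sigmaPartialField K L σL F (i + k) := by
  induction k with
  | zero => exact hx
  | succ k ih =>
    rw [Function.iterate_succ_apply']
    exact spf_sigma_mem hcomp F ih

lemma spf_exists_of_mem_adjoin (hcomp : ∀ x : K, σL (algebraMap K L x) = algebraMap K L (σK x))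
    (F : Set L) {x : L} (hx : x ∈ adjoin K (⋃ i : ℕ, σL^[i] '' F)) :
    ∃ i, x ∈ sigmaPartialField K L σL F i := by
  have hle : adjoin K (⋃ i : ℕ, σL^[i] '' F) ≤ ⨆ i, sigmaPartialField K L σL F i := by
    rw [adjoin_le_iff]
    intro y hy
    obtain ⟨i, f, hf, rfl⟩ := by simpa only [Set.mem_iUnion, Set.mem_image] using hy
    have : σL^[i] f ∈ sigmaPartialField K L σL F i :=
      subset_adjoin _ _ (mem_spfGen.mpr ⟨i, le_refl _, f, hf, rfl⟩)
    exact (SetLike.le_def.mp (le_iSup (sigmaPartialField K L σL F) i)) this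
  have hx2 := hle hx
  obtain ⟨s, hs⟩ := IntermediateField.exists_finset_of_mem_iSup hx2
  refine ⟨s.sup id, ?_⟩
  have : (⨆ i ∈ s, sigmaPartialField K L σL F i) ≤ sigmaPartialField K L σL F (s.sup id) :=
    iSup₂_le fun i hi => spf_mono F (Finset.le_sup (f := id) hi)
  exact this hs

end Tower


section Helpers
variable {K L : Type} [Field K] [Field L] [Algebra K L]

lemma intfield_finrank_mono {M M' : IntermediateField K L} [FiniteDimensional K ↥M']
    (h : M ≤ M') : Module.finrank K ↥M ≤ Module.finrank K ↥M' := by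
  haveI : Module.Finite K ↥(Subalgebra.toSubmodule M'.toSubalgebra) :=
    (inferInstance : FiniteDimensional K ↥M')
  exact Submodule.finrank_mono (s := Subalgebra.toSubmodule M.toSubalgebra)
    (t := Subalgebra.toSubmodule M'.toSubalgebra) h

/-- restriction of `σ` to a ring hom between intermediate fields -/
noncomputable def sigmaResF (σ : L →+* L) (M M' : IntermediateField K L)
    (hmem : ∀ y ∈ M, σ y ∈ M') : ↥M →+* ↥M' where
  toFun y := ⟨σ y.1, hmem _ y.2⟩
  map_one' := by ext; simp
  map_mul' y z := by ext; simp
  map_zero' := by ext; simp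
  map_add' y z := by ext; simp

lemma fd_adjoin (halg : ∀ y : L, IsIntegral K y) {S : Set L} (hS : S.Finite) :
    FiniteDimensional K ↥(adjoin K S) := by
  haveI := hS.to_subtype
  exact IntermediateField.finiteDimensional_adjoin (fun x _ => halg x)

end Helpers

/-- If `a` is a minimal substandard generator of a finitely σ-generated Galois
difference field extension `L|K`, then `σ(a)` is also a substandard generator and
`[K(σ(a)) : K] = [K(a) : K]`. -/
theorem strongly_etale_stmt19
    (K L : Type) [Field K] [Field L] [Algebra K L] [IsGalois K L]
    (σK : K →+* K) (σL : L →+* L)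
    (hcomp : ∀ x : K, σL (algebraMap K L x) = algebraMap K L (σK x))
    (d : ℕ) (hld : HasLimitDegree K L σL d)
    (a : L) (ha : IsSubstandardGenerator K L σL d a)
    (hmin : ∀ b : L, IsSubstandardGenerator K L σL d b →
      Module.finrank K ↥(IntermediateField.adjoin K ({a} : Set L))
        ≤ Module.finrank K ↥(IntermediateField.adjoin K ({b} : Set L))) :
    IsSubstandardGenerator K L σL d (σL a) ∧
      Module.finrank K ↥(IntermediateField.adjoin K ({σL a} : Set L))
        = Module.finrank K ↥(IntermediateField.adjoin K ({a} : Set L)) := by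
  classical
  obtain ⟨hrad, hdeg, hgal⟩ := ha
  obtain ⟨F, htop, N, hN⟩ := hld
  have halg : ∀ y : L, IsIntegral K y := fun y => (Algebra.IsAlgebraic.isAlgebraic y).isIntegral
  set G : ℕ → IntermediateField K L := sigmaPartialField K L σL ({a} : Set L) with hGdef
  set E : ℕ → IntermediateField K L := sigmaPartialField K L σL (↑F : Set L) with hEdef
  have hfinG : ∀ j, FiniteDimensional K ↥(G j) := fun j =>
    fd_adjoin halg (spfGen_finite (Set.finite_singleton a) j)
  have hfinE : ∀ i, FiniteDimensional K ↥(E i) := fun i =>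
    fd_adjoin halg (spfGen_finite F.finite_toSet i)
  set r : ℕ → ℕ :=
    fun j => Module.finrank ↥(G j) ↥(adjoin ↥(G j) (σL^[j + 1] '' ({a} : Set L))) with hrdef
  have hgs : ∀ j, Module.finrank K ↥(G (j + 1)) = Module.finrank K ↥(G j) * r j :=
    fun j => spf_finrank_succ ({a} : Set L) j
  have hGmono : Monotone G := spf_mono ({a} : Set L)
  have hsingle : ∀ j : ℕ, σL^[j] '' ({a} : Set L) = {σL^[j] a} := fun j => Set.image_singleton
  have hrd : ∀ j, r (j + 1) ≤ r j := by
    intro j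
    have hmem : ∀ y ∈ G j, σL y ∈ G (j + 1) := fun y hy => spf_sigma_mem hcomp _ hy
    have h := gen_deg_le σL (sigmaResF σL (G j) (G (j + 1)) hmem) (fun y => rfl)
      (σL^[j + 1] a) ((halg _).tower_top) ((halg _).tower_top)
    have e1 : σL^[j + 1 + 1] '' ({a} : Set L) = {σL (σL^[j + 1] a)} := by
      rw [Set.image_singleton, Function.iterate_succ_apply']
    have e2 : σL^[j + 1] '' ({a} : Set L) = {σL^[j + 1] a} := Set.image_singleton
    simp only [hrdef]
    rw [e1, e2]
    exact h
  have hranti : ∀ j j', j ≤ j' → r j' ≤ r j := fun j j' h =>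
    antitone_nat_of_succ_le hrd h
  have hG0 : G 0 = adjoin K ({a} : Set L) := by
    rw [hGdef]
    show IntermediateField.adjoin K _ = _
    congr 1
    ext x
    rw [mem_spfGen]
    constructor
    · rintro ⟨j, hj, f, hf, rfl⟩
      rw [Nat.le_zero] at hj
      subst hj
      simpa using hf
    · intro hx
      exact ⟨0, le_refl _, x, hx, rfl⟩
  have hG1 : G 1 = adjoin K ({a, σL a} : Set L) := by
    rw [hGdef]
    show IntermediateField.adjoin K _ = _
    congr 1
    ext x
    rw [mem_spfGen]
    constructor
    · rintro ⟨j, hj, f, hf, rfl⟩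
      rw [Set.mem_singleton_iff] at hf
      subst hf
      interval_cases j
      · exact Or.inl rfl
      · exact Or.inr rfl
    · rintro (rfl | rfl)
      · exact ⟨0, by omega, x, rfl, rfl⟩
      · exact ⟨1, by omega, a, rfl, rfl⟩
  haveI := hfinG 0
  have hpos0 : 0 < Module.finrank K ↥(G 0) := Module.finrank_pos
  have hr0 : r 0 = d := by
    have e1 : Module.finrank K ↥(G 1) = Module.finrank K ↥(G 0) * r 0 := hgs 0
    have e2 : Module.finrank K ↥(G 1) = d * Module.finrank K ↥(G 0) := by
      rw [hG1, hG0]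
      exact hdeg
    refine Nat.eq_of_mul_eq_mul_left hpos0 ?_
    rw [← e1, e2, Nat.mul_comm]
  -- radiciality of F over ⟨a⟩
  have hrangeEq : adjoin K (Set.range fun i : ℕ => σL^[i] a)
      = adjoin K (⋃ i : ℕ, σL^[i] '' ({a} : Set L)) := by
    congr 1
    ext x
    simp [Set.image_singleton, Set.mem_range, eq_comm]
  have hchoice : ∀ f ∈ F, ∃ n s, σL^[n] f ∈ G s := by
    intro f _
    obtain ⟨n, hn⟩ := hrad f
    rw [hrangeEq] at hn
    obtain ⟨s, hs⟩ := spf_exists_of_mem_adjoin hcomp _ hn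
    exact ⟨n, s, hs⟩
  choose! nf sf hnsf using hchoice
  set m := F.sup nf with hmdef
  set s0 := F.sup (fun f => sf f + (m - nf f)) with hs0def
  have hFm : ∀ f ∈ F, σL^[m] f ∈ G s0 := by
    intro f hf
    have h1 : σL^[m] f = σL^[m - nf f] (σL^[nf f] f) := by
      rw [← Function.iterate_add_apply]
      congr 1
      have : nf f ≤ m := Finset.le_sup (f := nf) hf
      omega
    rw [h1]
    have h2 := spf_sigma_iterate_mem hcomp _ (m - nf f) (hnsf f hf)
    have h3 : sf f + (m - nf f) ≤ s0 := Finset.le_sup (f := fun f => sf f + (m - nf f)) hf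
    exact hGmono h3 h2
  set Ai : ℕ → IntermediateField K L := fun i =>
    adjoin K (σL^[m] '' (⋃ j ∈ Finset.range (i + 1), σL^[j] '' (↑F : Set L))) with hAidef
  have hfinAi : ∀ i, FiniteDimensional K ↥(Ai i) := fun i =>
    fd_adjoin halg ((spfGen_finite F.finite_toSet i).image _)
  have hAiG : ∀ i, Ai i ≤ G (s0 + i) := by
    intro i
    rw [hAidef]
    rw [adjoin_le_iff]
    rintro x ⟨y, hy, rfl⟩
    rw [mem_spfGen] at hy
    obtain ⟨j, hj, f, hf, rfl⟩ := hy
    have h1 : σL^[m] (σL^[j] f) = σL^[j] (σL^[m] f) := by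
      rw [← Function.iterate_add_apply, ← Function.iterate_add_apply, Nat.add_comm]
    rw [h1]
    have h2 := spf_sigma_iterate_mem hcomp _ j (hFm f hf)
    exact hGmono (by omega : s0 + j ≤ s0 + i) h2
  set Tf : Finset L := (Finset.range m).biUnion (fun j => F.image (σL^[j])) with hTfdef
  haveI : FiniteDimensional K ↥(adjoin K (↑Tf : Set L)) := fd_adjoin halg Tf.finite_toSet
  set C2 : ℕ := Module.finrank K ↥(adjoin K (↑Tf : Set L)) with hC2def
  have hTfmem : ∀ x : L, x ∈ (↑Tf : Set L) ↔ ∃ j < m, ∃ f ∈ F, σL^[j] f = x := by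
    intro x
    simp [hTfdef, Finset.mem_biUnion, Finset.mem_range, Finset.mem_image]
  have hgenE : ∀ i, (⋃ j ∈ Finset.range ((m + i) + 1), σL^[j] '' (↑F : Set L))
      = (σL^[m] '' (⋃ j ∈ Finset.range (i + 1), σL^[j] '' (↑F : Set L))) ∪ (↑Tf : Set L) := by
    intro i
    ext x
    rw [Set.mem_union, mem_spfGen, hTfmem]
    constructor
    · rintro ⟨j, hj, f, hf, rfl⟩
      rcases Nat.lt_or_ge j m with h | h
      · exact Or.inr ⟨j, h, f, hf, rfl⟩
      · refine Or.inl ⟨σL^[j - m] f, ?_, ?_⟩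
        · rw [mem_spfGen]
          exact ⟨j - m, by omega, f, hf, rfl⟩
        · rw [← Function.iterate_add_apply]
          congr 1
          omega
    · rintro (⟨y, hy, rfl⟩ | ⟨j, hj, f, hf, rfl⟩)
      · rw [mem_spfGen] at hy
        obtain ⟨j, hj, f, hf, rfl⟩ := hy
        rw [← Function.iterate_add_apply]
        exact ⟨m + j, by omega, f, hf, rfl⟩
      · exact ⟨j, by omega, f, hf, rfl⟩
  have hEsplit : ∀ i, Module.finrank K ↥(E (m + i)) ≤ Module.finrank K ↥(Ai i) * C2 := by
    intro i
    have he : E (m + i) = (adjoin (↥(Ai i)) (↑Tf : Set L)).restrictScalars K := by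
      rw [hEdef]
      show IntermediateField.adjoin K _ = _
      rw [hgenE i, hAidef, ← adjoin_adjoin_left]
    rw [he, finrank_restrict']
    refine Nat.mul_le_mul_left _ ?_
    have h := gen_deg_le_finset Tf (RingHom.id L) (algebraMap K ↥(Ai i))
      (fun y => (IsScalarTower.algebraMap_apply K ↥(Ai i) L y).symm) halg
      (fun y => (halg y).tower_top)
    rw [hC2def]
    have himg : (⇑(RingHom.id L)) '' (↑Tf : Set L) = (↑Tf : Set L) := by simp
    rw [himg] at h
    exact h
  have hgrowE : ∀ i, N ≤ i → ∀ k,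
      Module.finrank K ↥(E (i + k)) = d ^ k * Module.finrank K ↥(E i) := by
    intro i hi k
    induction k with
    | zero => simp
    | succ k ih =>
      have h1 : Module.finrank K ↥(E (i + k + 1)) = d * Module.finrank K ↥(E (i + k)) :=
        hN (i + k) (by omega)
      calc Module.finrank K ↥(E (i + (k + 1))) = d * Module.finrank K ↥(E (i + k)) := h1
        _ = d ^ (k + 1) * Module.finrank K ↥(E i) := by rw [ih]; ring
  have hgrowG : ∀ J k, Module.finrank K ↥(G (J + k)) ≤ r J ^ k * Module.finrank K ↥(G J) := by
    intro J k
    induction k with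
    | zero => simp
    | succ k ih =>
      calc Module.finrank K ↥(G (J + (k + 1)))
          = Module.finrank K ↥(G (J + k)) * r (J + k) := hgs (J + k)
        _ ≤ (r J ^ k * Module.finrank K ↥(G J)) * r J :=
            Nat.mul_le_mul ih (hranti J (J + k) (by omega))
        _ = r J ^ (k + 1) * Module.finrank K ↥(G J) := by ring
  set J := s0 + (N + 1) with hJdef
  have hdleJ : d ≤ r J := by
    haveI := hfinE (m + (N + 1))
    haveI := hfinG J
    refine num_key (B := Module.finrank K ↥(G J) * C2)
      (Module.finrank_pos (R := K) (M := ↥(E (m + (N + 1))))) ?_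
    intro k
    have h1 : Module.finrank K ↥(E ((m + (N + 1)) + k))
        = d ^ k * Module.finrank K ↥(E (m + (N + 1))) := hgrowE _ (by omega) k
    have h2 := hEsplit (N + 1 + k)
    haveI := hfinG (s0 + (N + 1 + k))
    have h3 : Module.finrank K ↥(Ai (N + 1 + k)) ≤ Module.finrank K ↥(G (s0 + (N + 1 + k))) :=
      intfield_finrank_mono (hAiG _)
    have h4 := hgrowG J k
    have hidx1 : (m + (N + 1)) + k = m + (N + 1 + k) := by omega
    have hidx2 : s0 + (N + 1 + k) = J + k := by omega
    rw [hidx1] at h1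
    rw [hidx2] at h3
    calc d ^ k * Module.finrank K ↥(E (m + (N + 1)))
        = Module.finrank K ↥(E (m + (N + 1 + k))) := h1.symm
      _ ≤ Module.finrank K ↥(Ai (N + 1 + k)) * C2 := h2
      _ ≤ Module.finrank K ↥(G (J + k)) * C2 := Nat.mul_le_mul_right _ h3
      _ ≤ (r J ^ k * Module.finrank K ↥(G J)) * C2 := Nat.mul_le_mul_right _ h4
      _ = r J ^ k * (Module.finrank K ↥(G J) * C2) := by ring
  have hr1 : r 1 = d := by
    refine le_antisymm ?_ ?_
    · rw [← hr0]
      exact hrd 0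
    · exact le_trans hdleJ (hranti 1 J (by omega))
  -- membership map from K(a) to K(σa)
  have hmemA : ∀ y ∈ adjoin K ({a} : Set L), σL y ∈ adjoin K ({σL a} : Set L) := by
    intro y hy
    refine gen_adjoin_mem σL σK (fun z => (hcomp z).symm) ?_ hy
    rintro s rfl
    exact subset_adjoin _ _ rfl
  -- [K(σa)(σ²a) : K(σa)] = d
  have hr0eq : Module.finrank ↥(adjoin K ({a} : Set L))
      ↥(adjoin (↥(adjoin K ({a} : Set L))) ({σL a} : Set L)) = d := by
    have h := hr0
    simp only [hrdef] at h
    rw [Set.image_singleton, zero_add, Function.iterate_one, hG0] at h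
    exact h
  have hcle : Module.finrank ↥(adjoin K ({σL a} : Set L))
      ↥(adjoin (↥(adjoin K ({σL a} : Set L))) ({σL (σL a)} : Set L)) ≤ d := by
    have h := gen_deg_le σL (sigmaResF σL (adjoin K ({a} : Set L))
        (adjoin K ({σL a} : Set L)) hmemA) (fun y => rfl)
      (σL a) ((halg _).tower_top) ((halg _).tower_top)
    exact le_trans h (le_of_eq hr0eq)
  have hcge : d ≤ Module.finrank ↥(adjoin K ({σL a} : Set L))
      ↥(adjoin (↥(adjoin K ({σL a} : Set L))) ({σL (σL a)} : Set L)) := by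
    have hsub1 : adjoin K ({σL a} : Set L) ≤ G 1 := by
      rw [hG1]
      apply adjoin.mono
      intro x hx
      rw [Set.mem_singleton_iff] at hx
      subst hx
      exact Or.inr rfl
    have h := gen_deg_le (RingHom.id L) (IntermediateField.inclusion hsub1).toRingHom
      (fun y => rfl) (σL (σL a)) ((halg _).tower_top) ((halg _).tower_top)
    simp only [RingHom.id_apply] at h
    rw [← hr1]
    refine le_trans (le_of_eq ?_) h
    simp only [hrdef]
    rw [Set.image_singleton]
    rfl
  have hceq : Module.finrank ↥(adjoin K ({σL a} : Set L))
      ↥(adjoin (↥(adjoin K ({σL a} : Set L))) ({σL (σL a)} : Set L)) = d :=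
    le_antisymm hcle hcge
  -- Goal B
  have hGoalB : Module.finrank K ↥(adjoin K ({σL a, σL (σL a)} : Set L))
      = d * Module.finrank K ↥(adjoin K ({σL a} : Set L)) := by
    have he : adjoin K ({σL a, σL (σL a)} : Set L)
        = (adjoin (↥(adjoin K ({σL a} : Set L))) ({σL (σL a)} : Set L)).restrictScalars K := by
      rw [adjoin_adjoin_left]
      congr 1
    rw [he, finrank_restrict', hceq, Nat.mul_comm]
  -- Goal A
  have hGoalA : ∀ x : L, ∃ n : ℕ,
      σL^[n] x ∈ adjoin K (Set.range fun i : ℕ => σL^[i] (σL a)) := by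
    intro x
    obtain ⟨n, hn⟩ := hrad x
    refine ⟨n + 1, ?_⟩
    rw [Function.iterate_succ_apply']
    refine gen_adjoin_mem σL σK (fun z => (hcomp z).symm) ?_ hn
    rintro s ⟨i, rfl⟩
    refine subset_adjoin _ _ ⟨i, ?_⟩
    show σL^[i] (σL a) = σL (σL^[i] a)
    rw [← Function.iterate_succ_apply, Function.iterate_succ_apply']
  -- the minimal polynomial computation
  have hmapcomp : (algebraMap K L).comp σK = σL.comp (algebraMap K L) :=
    RingHom.ext fun z => (hcomp z).symm
  have hq0 : (Polynomial.aeval (σL a)) ((minpoly K a).map σK) = 0 := by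
    rw [Polynomial.aeval_def, Polynomial.eval₂_map, hmapcomp, ← Polynomial.hom_eval₂,
      ← Polynomial.aeval_def, minpoly.aeval, map_zero]
  -- Goal C : K(σa) | K is Galois
  have hGoalC : IsGalois K ↥(adjoin K ({σL a} : Set L)) := by
    have hqdvd : minpoly K (σL a) ∣ (minpoly K a).map σK := minpoly.dvd _ _ hq0
    have hroots : ∀ x ∈ (minpoly K (σL a)).rootSet L, x ∈ adjoin K ({σL a} : Set L) := by
      intro x hx
      rw [Polynomial.mem_rootSet] at hx
      obtain ⟨hq0', hx0⟩ := hx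
      obtain ⟨c, hc⟩ := hqdvd
      have hx1 : (Polynomial.aeval x) ((minpoly K a).map σK) = 0 := by
        rw [hc, map_mul, hx0, zero_mul]
      have hPsplit : ((minpoly K a).map (algebraMap K L)).Splits :=
        Normal.splits (inferInstance : Normal K L) a
      have hPmap : ((minpoly K a).map σK).map (algebraMap K L)
          = ((minpoly K a).map (algebraMap K L)).map σL := by
        rw [Polynomial.map_map, Polynomial.map_map, hmapcomp]
      have hPne : ((minpoly K a).map (algebraMap K L)) ≠ 0 :=
        Polynomial.map_ne_zero (minpoly.ne_zero (halg a))
      have hx2 : x ∈ (((minpoly K a).map (algebraMap K L)).map σL).roots := by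
        rw [Polynomial.mem_roots (Polynomial.map_ne_zero hPne)]
        rw [Polynomial.IsRoot.def, ← hPmap, Polynomial.eval_map, ← Polynomial.aeval_def]
        exact hx1
      rw [hPsplit.roots_map σL] at hx2
      obtain ⟨y, hy, rfl⟩ := Multiset.mem_map.mp hx2
      have hyroot : y ∈ (minpoly K a).rootSet L := by
        rw [Polynomial.mem_rootSet]
        refine ⟨minpoly.ne_zero (halg a), ?_⟩
        rw [Polynomial.mem_roots hPne, Polynomial.IsRoot.def, Polynomial.eval_map] at hy
        rw [Polynomial.aeval_def]
        exact hy
      haveI := hgal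
      have hamem : a ∈ adjoin K ({a} : Set L) := subset_adjoin _ _ rfl
      have hmineq : minpoly K (⟨a, hamem⟩ : ↥(adjoin K ({a} : Set L))) = minpoly K a := by
        have := minpoly.algebraMap_eq (A := K)
          (algebraMap (↥(adjoin K ({a} : Set L))) L).injective
          (⟨a, hamem⟩ : ↥(adjoin K ({a} : Set L)))
        exact this.symm
      have hsplits_in : ((minpoly K a).map
          (algebraMap K ↥(adjoin K ({a} : Set L)))).Splits := by
        rw [← hmineq]
        exact Normal.splits (inferInstance : Normal K ↥(adjoin K ({a} : Set L)))
          (⟨a, hamem⟩ : ↥(adjoin K ({a} : Set L)))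
      have himg := hsplits_in.image_rootSet (adjoin K ({a} : Set L)).val
      have hyin : y ∈ adjoin K ({a} : Set L) := by
        rw [← himg] at hyroot
        obtain ⟨z, _, rfl⟩ := hyroot
        exact z.2
      exact hmemA y hyin
    have hqsplitL : ((minpoly K (σL a)).map (algebraMap K L)).Splits :=
      Normal.splits (inferInstance : Normal K L) (σL a)
    have hmemroot : σL a ∈ (minpoly K (σL a)).rootSet L := by
      rw [Polynomial.mem_rootSet]
      exact ⟨minpoly.ne_zero (halg (σL a)), minpoly.aeval _ _⟩
    have hadj_eq : adjoin K ((minpoly K (σL a)).rootSet L) = adjoin K ({σL a} : Set L) := by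
      apply le_antisymm
      · rw [adjoin_le_iff]
        exact fun x hx => hroots x hx
      · apply adjoin.mono
        intro x hx
        rw [Set.mem_singleton_iff] at hx
        subst hx
        exact hmemroot
    haveI hsplf : Polynomial.IsSplittingField K ↥(adjoin K ((minpoly K (σL a)).rootSet L))
        (minpoly K (σL a)) := adjoin_rootSet_isSplittingField hqsplitL
    haveI hnormal : Normal K ↥(adjoin K ({σL a} : Set L)) :=
      hadj_eq ▸ Normal.of_isSplittingField (minpoly K (σL a))
    haveI : Algebra.IsSeparable K ↥(adjoin K ({σL a} : Set L)) :=
      Algebra.isSeparable_tower_bot_of_isSeparable K _ L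
    exact IsGalois.mk
  have hsub : IsSubstandardGenerator K L σL d (σL a) := ⟨hGoalA, hGoalB, hGoalC⟩
  have hle1 := hmin (σL a) hsub
  have hle2 : Module.finrank K ↥(adjoin K ({σL a} : Set L))
      ≤ Module.finrank K ↥(adjoin K ({a} : Set L)) := by
    have e1 : Module.finrank K ↥(adjoin K ({σL a} : Set L)) = (minpoly K (σL a)).natDegree := by
      simpa using IntermediateField.adjoin.finrank (halg (σL a))
    have e2 : Module.finrank K ↥(adjoin K ({a} : Set L)) = (minpoly K a).natDegree := by
      simpa using IntermediateField.adjoin.finrank (halg a)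
    rw [e1, e2]
    calc (minpoly K (σL a)).natDegree
        ≤ ((minpoly K a).map σK).natDegree :=
          Polynomial.natDegree_le_of_dvd (minpoly.dvd _ _ hq0)
            (Polynomial.map_ne_zero (minpoly.ne_zero (halg a)))
      _ = (minpoly K a).natDegree := Polynomial.natDegree_map σK
  exact ⟨hsub, le_antisymm hle2 hle1⟩
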